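/- Let G be a graph. The graph semiring S_G satisfies the identity c_n ≈ x³ for every integer n ≥ 1 if and only if G is acyclic. -/

import Mathlib

universe u

-- The underlying set of the graph semiring of a graph with vertex set `V`:
-- the vertices together with two extra elements `0` and `ω`.
inductive GS (V : Type u) : Type u where
  | zero : GS V
  | omega : GS V
  | vert : V → GS V

-- Multiplication of the graph semiring: `x·y = ω` if `x, y` are vertices joined by an
-- edge, and `x·y = 0` otherwise.
open Classical in
noncomputable def gsMul {V : Type u} (E : V → V → Prop) : GS V → GS V → GS V
  | GS.vert a, GS.vert b => if E a b then GS.omega else GS.zero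
  | _, _ => GS.zero

-- The flat addition of the graph semiring: `a + b = a` if `a = b`, else `0`.
open Classical in
noncomputable def gsAdd {V : Type u} (a b : GS V) : GS V :=
  if a = b then a else GS.zero

-- `gsSum f n = f 0 + f 1 + ⋯ + f n` (a sum of `n + 1` terms).
noncomputable def gsSum {V : Type u} (f : ℕ → GS V) : ℕ → GS V
  | 0 => f 0
  | n + 1 => gsAdd (gsSum f n) (f (n + 1))

-- `E` is a graph (in the sense of the paper): a directed graph with no isolated
-- vertices in which every vertex has out-degree at most 1 and in-degree at most 1.
def IsGraph {V : Type u} (E : V → V → Prop) : Prop :=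
  (∀ v : V, ∃ u : V, E v u ∨ E u v) ∧
  (∀ v a b : V, E v a → E v b → a = b) ∧
  (∀ v a b : V, E a v → E b v → a = b)

-- `v 0, v 1, …, v (m - 1)` is a path of the graph `E` with `m` vertices.
def IsPathOn {V : Type u} (E : V → V → Prop) (m : ℕ) (v : ℕ → V) : Prop :=
  (∀ i < m, ∀ j < m, v i = v j → i = j) ∧
  (∀ i : ℕ, i + 1 < m → E (v i) (v (i + 1)))

-- `v 0, v 1, …, v (m - 1)` is a cycle of the graph `E` of length `m`.
def IsCycleOn {V : Type u} (E : V → V → Prop) (m : ℕ) (v : ℕ → V) : Prop :=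
  1 ≤ m ∧
  (∀ i < m, ∀ j < m, v i = v j → i = j) ∧
  (∀ i : ℕ, i + 1 < m → E (v i) (v (i + 1))) ∧
  E (v (m - 1)) (v 0)

-- The graph semiring of `E` satisfies the identity `c_n ≈ x³`: for all
-- `x, x_1, …, x_n` one has `x_1x_2 + x_2x_3 + ⋯ + x_{n-1}x_n + x_nx_1 = x·x·x`.
def satCx3 {V : Type u} (E : V → V → Prop) (n : ℕ) : Prop :=
  ∀ (x : GS V) (g : ℕ → GS V),
    gsSum (fun i => gsMul E (g i) (g ((i + 1) % n))) (n - 1) =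
      gsMul E (gsMul E x x) x

lemma gs_rhs_zero {V : Type u} (E : V → V → Prop) (x : GS V) :
    gsMul E (gsMul E x x) x = GS.zero := by
  cases x with
  | zero => rfl
  | omega => rfl
  | vert a =>
      by_cases hE : E a a
      · have h1 : gsMul E (GS.vert a) (GS.vert a) = GS.omega := by simp [gsMul, hE]
        rw [h1]; rfl
      · have h1 : gsMul E (GS.vert a) (GS.vert a) = GS.zero := by simp [gsMul, hE]
        rw [h1]; rfl

lemma gsSum_ne_zero {V : Type u} (f : ℕ → GS V) :
    ∀ k, gsSum f k ≠ GS.zero → ∀ i ≤ k, f i ≠ GS.zero := by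
  intro k
  induction k with
  | zero => intro h i hi; interval_cases i; exact h
  | succ k ih =>
      intro h i hi
      have h' : gsAdd (gsSum f k) (f (k + 1)) ≠ GS.zero := h
      unfold gsAdd at h'
      by_cases heq : gsSum f k = f (k + 1)
      · rw [if_pos heq] at h'
        rcases eq_or_lt_of_le hi with h1 | h1
        · rw [h1, ← heq]; exact h'
        · exact ih h' i (Nat.lt_succ_iff.mp h1)
      · rw [if_neg heq] at h'
        exact absurd rfl h'

lemma gsSum_all_omega {V : Type u} (f : ℕ → GS V) :
    ∀ k, (∀ i ≤ k, f i = GS.omega) → gsSum f k = GS.omega := by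
  intro k
  induction k with
  | zero => intro h; exact h 0 le_rfl
  | succ k ih =>
      intro h
      show gsAdd (gsSum f k) (f (k + 1)) = GS.omega
      rw [ih (fun i hi => h i (hi.trans (Nat.le_succ k))), h (k + 1) le_rfl]
      simp [gsAdd]

lemma gsMul_ne_zero {V : Type u} {E : V → V → Prop} {a b : GS V}
    (h : gsMul E a b ≠ GS.zero) : ∃ x y, a = GS.vert x ∧ b = GS.vert y ∧ E x y := by
  cases a with
  | zero => exact absurd rfl h
  | omega => exact absurd rfl h
  | vert x =>
      cases b with
      | zero => exact absurd rfl h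
      | omega => exact absurd rfl h
      | vert y =>
          refine ⟨x, y, rfl, rfl, ?_⟩
          by_contra hE
          exact h (by simp [gsMul, hE])

lemma walk_prop {V : Type u} {E : V → V → Prop} (hG : IsGraph E)
    (u : ℕ → V) (hstep : ∀ i, E (u i) (u (i + 1))) :
    ∀ k i j, u i = u j → u (i + k) = u (j + k) := by
  intro k
  induction k with
  | zero => intro i j h; simpa using h
  | succ k ih =>
      intro i j h
      have h1 := hstep (i + k)
      have h2 := hstep (j + k)
      rw [← ih i j h] at h2
      exact hG.2.1 _ _ _ h1 h2

/-- From an infinite walk returning to its start, extract a cycle. -/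
lemma exists_cycle {V : Type u} {E : V → V → Prop} (hG : IsGraph E)
    (u : ℕ → V) (hstep : ∀ i, E (u i) (u (i + 1))) (n : ℕ) (hn : 1 ≤ n)
    (hret : u n = u 0) : ∃ m v, IsCycleOn E m v := by
  classical
  have hex : ∃ k, 1 ≤ k ∧ u k = u 0 := ⟨n, hn, hret⟩
  set m := Nat.find hex with hm
  obtain ⟨hm1, hmret⟩ := Nat.find_spec hex
  refine ⟨m, u, hm1, ?_, fun i hi => hstep i, ?_⟩
  · intro i hi j hj hij
    by_contra hne
    -- wlog i < j
    have key : ∀ i j, i < m → j < m → i < j → u i = u j → False := by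
      intro i j hi hj hlt heq
      have h0 : u (i + (m - j)) = u 0 := by
        have := walk_prop hG u hstep (m - j) i j heq
        rw [Nat.add_sub_cancel' (le_of_lt hj)] at this
        rw [this, hmret]
      have hk1 : 1 ≤ i + (m - j) := by omega
      have hk2 : i + (m - j) < m := by omega
      exact Nat.find_min hex hk2 ⟨hk1, h0⟩
    rcases lt_or_gt_of_ne hne with h | h
    · exact key i j hi hj h hij
    · exact key j i hj hi h hij.symm
  · have := hstep (m - 1)
    rw [Nat.sub_add_cancel hm1, hmret] at this
    exact this

/-- The graph semiring of a graph `E` satisfies `c_n ≈ x³` for every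
`n ≥ 1` iff the graph is acyclic. -/
theorem stmt_14 {V : Type u} (E : V → V → Prop) (hG : IsGraph E) :
    (∀ n : ℕ, 1 ≤ n → satCx3 E n) ↔
      ¬ ∃ (m : ℕ) (v : ℕ → V), IsCycleOn E m v := by
  constructor
  · rintro hsat ⟨m, v, hm1, hinj, hedge, hlast⟩
    have hs := hsat m hm1 GS.zero (fun i => GS.vert (v (i % m)))
    rw [gs_rhs_zero] at hs
    rw [gsSum_all_omega _ (m - 1) ?_] at hs
    · cases hs
    · intro i hi
      have him : i % m = i := Nat.mod_eq_of_lt (by omega)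
      show gsMul E (GS.vert (v (i % m))) (GS.vert (v ((i + 1) % m % m))) = GS.omega
      rw [him, Nat.mod_mod_of_dvd _ dvd_rfl]
      rcases Nat.lt_or_ge (i + 1) m with h | h
      · rw [Nat.mod_eq_of_lt h]
        simp [gsMul, hedge i h]
      · have : i + 1 = m := by omega
        rw [this, Nat.mod_self]
        have : i = m - 1 := by omega
        rw [this]
        simp [gsMul, hlast]
  · intro hnc n hn x g
    rw [gs_rhs_zero]
    by_contra h
    have hterms := gsSum_ne_zero _ (n - 1) h
    have hmodle : ∀ i : ℕ, i % n ≤ n - 1 := by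
      intro i
      have := Nat.mod_lt i (show 0 < n by omega)
      omega
    have hmod1 : ∀ i : ℕ, (i % n + 1) % n = (i + 1) % n := by
      intro i
      rw [Nat.add_mod i 1 n, Nat.add_mod (i % n) 1 n, Nat.mod_mod_of_dvd _ dvd_rfl]
    have hvert : ∀ i : ℕ, ∃ a, g (i % n) = GS.vert a := by
      intro i
      obtain ⟨a, b, ha, _, _⟩ := gsMul_ne_zero (hterms (i % n) (hmodle i))
      exact ⟨a, ha⟩
    choose w hw using hvert
    have hstep : ∀ i, E (w i) (w (i + 1)) := by
      intro i
      obtain ⟨a, b, ha, hb, hE⟩ := gsMul_ne_zero (hterms (i % n) (hmodle i))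
      rw [hmod1 i] at hb
      have h1 : w i = a := by
        have := (hw i).symm.trans ha
        exact GS.vert.inj this
      have h2 : w (i + 1) = b := by
        have := (hw (i + 1)).symm.trans hb
        exact GS.vert.inj this
      rw [h1, h2]
      exact hE
    have hret : w n = w 0 := by
      have h1 := hw n
      have h2 := hw 0
      rw [Nat.mod_self] at h1
      rw [Nat.zero_mod] at h2
      exact GS.vert.inj (h1.symm.trans h2)
    exact hnc (exists_cycle hG w hstep n hn hret)
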